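/- Let n, m be natural numbers with m ≤ C(n,2). For every finite simple graph G with n vertices and m edges, the total number of cliques of G is at most the total number of cliques of H_{n,m}. -/

import Mathlib

open SimpleGraph

/-- The graph `H_{n,m}` on `n` vertices, where `k` is the unique integer with
`C(k,2) ≤ m < C(k+1,2)` and `r = m - C(k,2)`: a clique on the `k` vertices `0, …, k-1`, one
additional vertex `k` adjacent to exactly `r` of the clique vertices (when `r > 0`), and all
remaining vertices isolated. -/
def graphHnm (n k r : ℕ) : SimpleGraph (Fin n) where
  Adj a b := a ≠ b ∧
    ((a.val < k ∧ b.val < k) ∨ (a.val = k ∧ b.val < r) ∨ (b.val = k ∧ a.val < r))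
  symm := ⟨by
    rintro a b ⟨hab, h⟩
    exact ⟨hab.symm, by tauto⟩⟩
  loopless := ⟨fun a h => h.1 rfl⟩

/-- The total number of cliques (of all sizes ≥ 1) of a graph. -/
noncomputable def numCliques {V : Type*} (G : SimpleGraph V) : ℕ :=
  Nat.card {s : Finset V // s.Nonempty ∧ G.IsClique (s : Set V)}

attribute [-instance] instDecidableEqFin

open Finset Finset.Colex
open scoped FinsetFamily

variable {n : ℕ}


/-- The set of elements of `Fin n` with value `< t`. -/
def below (n t : ℕ) : Finset (Fin n) := {x : Fin n | x.val < t}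

lemma mem_below {t : ℕ} {x : Fin n} : x ∈ below n t ↔ x.val < t := by
  simp [below]

lemma card_below {t : ℕ} (ht : t ≤ n) : #(below n t) = t := by
  rw [← Finset.card_range t]
  apply Finset.card_nbij (i := Fin.val)
  · intro x hx; simpa using (mem_below.1 hx)
  · intro x _ y _ h; exact Fin.val_injective h
  · intro x hx
    simp only [Finset.mem_coe, Finset.mem_range] at hx
    exact ⟨⟨x, hx.trans_le ht⟩, by simp [mem_below, hx], rfl⟩

lemma below_subset {t u : ℕ} (h : t ≤ u) : below n t ⊆ below n u := by
  intro x hx; rw [mem_below] at *; omega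

/-- `below n t` is the colex-least set of size `t`. -/
lemma below_colex_le {t : ℕ} {S : Finset (Fin n)} (hS : #S = t) :
    toColex (below n t) ≤ toColex S := by
  have ht : t ≤ n := by
    rw [← hS]
    simpa using Finset.card_le_univ S
  by_cases hsub : below n t = S
  · exact le_of_eq (by rw [hsub])
  have h2 : ¬ S ⊆ below n t := fun hsub' =>
    hsub (Finset.eq_of_subset_of_card_le hsub' (by rw [hS, card_below ht])).symm
  obtain ⟨x, hxS, hxb⟩ := Finset.not_subset.1 h2
  refine le_of_lt (toColex_lt_toColex.2 ⟨hsub, fun a ha hanS => ⟨x, hxS, hxb, ?_⟩⟩)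
  have h1 := mem_below.1 ha
  have h2 : ¬ x.val < t := fun h => hxb (mem_below.2 h)
  exact Fin.le_def.2 (by omega)

/-- If all elements of `S` are below some element of `T`, then `S < T` in colex. -/
lemma colex_lt_of_forall_lt {S T : Finset (Fin n)} {c : Fin n} (hc : c ∈ T)
    (h : ∀ x ∈ S, x < c) : toColex S < toColex T := by
  refine toColex_lt_toColex.2 ⟨?_, fun a ha hanT => ⟨c, hc, fun hcS => absurd (h c hcS) (lt_irrefl c), (h a ha).le⟩⟩
  rintro rfl
  exact absurd (h c hc) (lt_irrefl c)

section Cliques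
variable (G : SimpleGraph (Fin n))

open scoped Classical in
/-- All nonempty cliques of `G` as a finset. -/
noncomputable def allCliques : Finset (Finset (Fin n)) :=
  {s : Finset (Fin n) | s.Nonempty ∧ G.IsClique (s : Set (Fin n))}

lemma mem_allCliques {s : Finset (Fin n)} :
    s ∈ allCliques G ↔ s.Nonempty ∧ G.IsClique (s : Set (Fin n)) := by
  classical
  simp [allCliques]

lemma numCliques_eq_card : numCliques G = #(allCliques G) := by
  classical
  rw [numCliques, Nat.card_eq_fintype_card, Fintype.card_subtype]
  congr 1

open scoped Classical in
noncomputable def cliqueFin (s : ℕ) : Finset (Finset (Fin n)) := G.cliqueFinset s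

lemma mem_cliqueFin {s : ℕ} {t : Finset (Fin n)} :
    t ∈ cliqueFin G s ↔ G.IsClique (t : Set (Fin n)) ∧ #t = s := by
  classical
  rw [cliqueFin, SimpleGraph.mem_cliqueFinset_iff, SimpleGraph.isNClique_iff]

lemma cliqueFin_sized (s : ℕ) : ((cliqueFin G s : Finset (Finset (Fin n))) : Set (Finset (Fin n))).Sized s := by
  intro t ht
  exact (mem_cliqueFin G |>.1 ht).2

lemma allCliques_eq_biUnion :
    allCliques G = (Finset.Icc 1 n).biUnion (fun s => cliqueFin G s) := by
  classical
  ext t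
  simp only [mem_allCliques, Finset.mem_biUnion, Finset.mem_Icc, mem_cliqueFin]
  constructor
  · rintro ⟨hne, hcl⟩
    exact ⟨#t, ⟨Finset.card_pos.2 hne, by simpa using Finset.card_le_univ t⟩, hcl, rfl⟩
  · rintro ⟨s, ⟨h1, _⟩, hcl, rfl⟩
    exact ⟨Finset.card_pos.1 h1, hcl⟩

lemma card_allCliques :
    #(allCliques G) = ∑ s ∈ Finset.Icc 1 n, #(cliqueFin G s) := by
  rw [allCliques_eq_biUnion]
  apply Finset.card_biUnion
  intro x _ y _ hxy
  simp only [Finset.disjoint_left]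
  intro t htx hty
  exact hxy ((mem_cliqueFin G |>.1 htx).2.symm.trans (mem_cliqueFin G |>.1 hty).2)

lemma card_cliqueFin_one : #(cliqueFin G 1) = n := by
  classical
  have : cliqueFin G 1 = Finset.univ.image (fun v : Fin n => {v}) := by
    ext t
    simp only [mem_cliqueFin, Finset.mem_image, Finset.mem_univ, true_and]
    constructor
    · rintro ⟨hcl, hc⟩
      obtain ⟨v, rfl⟩ := Finset.card_eq_one.1 hc
      exact ⟨v, rfl⟩
    · rintro ⟨v, rfl⟩
      exact ⟨by simp, Finset.card_singleton v⟩
  rw [this, Finset.card_image_of_injective _ (fun a b h => by simpa using h)]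
  simp

lemma card_cliqueFin_two : #(cliqueFin G 2) = Nat.card G.edgeSet := by
  classical
  rw [Nat.card_eq_fintype_card, ← SimpleGraph.edgeFinset_card]
  symm
  apply Finset.card_nbij (i := fun e => Sym2.lift ⟨fun a b => ({a, b} : Finset (Fin n)), fun a b => Finset.pair_comm a b⟩ e)
  · intro e he
    induction e with
    | _ a b =>
      rw [Finset.mem_coe, SimpleGraph.mem_edgeFinset, SimpleGraph.mem_edgeSet] at he
      simp only [Sym2.lift_mk, Finset.mem_coe, mem_cliqueFin]
      exact ⟨(by rw [Finset.coe_insert, Finset.coe_singleton]; exact (SimpleGraph.isClique_pair (G := G)).2 (fun _ => he)), Finset.card_pair he.ne⟩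
  · intro e he f hf h
    induction e with
    | _ a b =>
      induction f with
      | _ c d =>
        simp only [Sym2.lift_mk] at h
        have : a = c ∧ b = d ∨ a = d ∧ b = c := by
          have h1 : a ∈ ({c, d} : Finset (Fin n)) := h ▸ (by simp)
          have h2 : b ∈ ({c, d} : Finset (Fin n)) := h ▸ (by simp)
          have h3 : c ∈ ({a, b} : Finset (Fin n)) := h ▸ (by simp)
          have h4 : d ∈ ({a, b} : Finset (Fin n)) := h ▸ (by simp)
          simp only [Finset.mem_insert, Finset.mem_singleton] at h1 h2 h3 h4
          tauto
        rcases this with ⟨rfl, rfl⟩ | ⟨rfl, rfl⟩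
        · rfl
        · exact Sym2.eq_swap
  · intro t ht
    rw [Finset.mem_coe, mem_cliqueFin] at ht
    obtain ⟨a, b, hab, rfl⟩ := Finset.card_eq_two.1 ht.2
    have hadj : G.Adj a b := by
      have := ht.1
      exact this (by simp) (by simp) hab
    exact ⟨s(a, b), by simpa [SimpleGraph.mem_edgeFinset] using hadj, by simp⟩

/-- shadows of cliques are cliques. -/
lemma shadow_cliqueFin (s : ℕ) : ∂ (cliqueFin G (s + 1)) ⊆ cliqueFin G s := by
  intro t ht
  rw [Finset.mem_shadow_iff] at ht
  obtain ⟨A, hA, a, ha, rfl⟩ := ht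
  rw [mem_cliqueFin] at hA ⊢
  refine ⟨hA.1.subset ?_, ?_⟩
  · exact_mod_cast Finset.coe_subset.2 (Finset.erase_subset a A)
  · rw [Finset.card_erase_of_mem ha, hA.2]; omega

lemma iterated_shadow_cliqueFin (i s : ℕ) : ∂^[i] (cliqueFin G (s + i)) ⊆ cliqueFin G s := by
  induction i generalizing s with
  | zero => simp
  | succ i ih =>
    rw [Function.iterate_succ_apply]
    calc ∂^[i] (∂ (cliqueFin G (s + (i + 1)))) ⊆ ∂^[i] (cliqueFin G (s + i)) := by
          apply Finset.shadow_monotone.iterate i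
          exact (by rw [show s + (i+1) = (s+i)+1 by omega] at *; exact shadow_cliqueFin G (s+i))
      _ ⊆ cliqueFin G s := ih s

end Cliques

set_option maxHeartbeats 2000000 in
lemma card_cliqueFin_le {k r s : ℕ} (hk : k < n) (hrk : r < k) (hs : 2 ≤ s)
    (G : SimpleGraph (Fin n)) (hm : #(cliqueFin G 2) = k.choose 2 + r) :
    #(cliqueFin G s) ≤ k.choose s + r.choose (s - 1) := by
  by_contra hcon
  push_neg at hcon
  -- first, s ≤ k
  have hsk : s ≤ k := by
    by_contra hsk
    push_neg at hsk
    have hpos : 0 < #(cliqueFin G s) := by omega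
    obtain ⟨A, hA⟩ := Finset.card_pos.1 hpos
    rw [mem_cliqueFin] at hA
    have hsub : Finset.powersetCard 2 A ⊆ cliqueFin G 2 := by
      intro t ht
      rw [Finset.mem_powersetCard] at ht
      exact (mem_cliqueFin G).2 ⟨hA.1.subset (by exact_mod_cast Finset.coe_subset.2 ht.1), ht.2⟩
    have h1 : s.choose 2 ≤ k.choose 2 + r := by
      rw [← hm]
      calc s.choose 2 = #(Finset.powersetCard 2 A) := by
            rw [Finset.card_powersetCard, hA.2]
        _ ≤ _ := Finset.card_le_card hsub
    have h2 : (k + 1).choose 2 ≤ s.choose 2 := Nat.choose_le_choose 2 (by omega)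
    have h3 : (k + 1).choose 2 = k.choose 1 + k.choose 2 := Nat.choose_succ_succ k 1
    rw [Nat.choose_one_right] at h3
    omega
  obtain ⟨κ, hκv⟩ : ∃ x : Fin n, x.val = k := ⟨⟨k, hk⟩, rfl⟩
  -- construct the top set of the initial segment
  obtain ⟨T, hT1, hT2, hT3, hT4⟩ :
      ∃ T : Finset (Fin n), #T = s - 1 ∧ (∀ x ∈ T, x.val < k) ∧
        (∀ S : Finset (Fin n), #S = s - 1 → toColex S ≤ toColex T →
          S = T ∨ S ⊆ below n r) ∧
        (∀ j : Fin n, j.val < r + 1 → ∃ S : Finset (Fin n), j ∈ S ∧ #S = s - 1 ∧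
          toColex S ≤ toColex T ∧ ∀ x ∈ S, x.val < k) := by
    by_cases hcase : s - 1 ≤ r
    · obtain ⟨ρ, hρv⟩ : ∃ x : Fin n, x.val = r := ⟨⟨r, hrk.trans hk⟩, rfl⟩
      have hρnb : ρ ∉ below n (s - 2) := by rw [mem_below]; omega
      refine ⟨insert ρ (below n (s - 2)), ?_, ?_, ?_, ?_⟩
      · rw [Finset.card_insert_of_notMem hρnb, card_below (by omega)]; omega
      · intro x hx
        rcases Finset.mem_insert.1 hx with rfl | hx
        · omega
        · have := mem_below.1 hx; omega
      · intro S hScard hSle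
        by_cases hρS : ρ ∈ S
        · left
          have hsd : toColex (S \ {ρ}) ≤ toColex ((insert ρ (below n (s - 2))) \ {ρ}) := by
            rw [toColex_sdiff_le_toColex_sdiff (by simpa using hρS) (by simp)]
            exact hSle
          rw [Finset.sdiff_singleton_eq_erase, Finset.sdiff_singleton_eq_erase,
            Finset.erase_insert hρnb] at hsd
          have hge := below_colex_le (n := n) (t := s - 2)
            (S := S.erase ρ) (by rw [Finset.card_erase_of_mem hρS, hScard]; omega)
          have heq : S.erase ρ = below n (s - 2) := toColex_inj.1 (le_antisymm hsd hge)
          rw [← heq, Finset.insert_erase hρS]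
        · right
          intro x hxS
          have hle : ∀ b ∈ S, b ≤ ρ := by
            apply forall_le_mono hSle
            intro b hb
            rcases Finset.mem_insert.1 hb with rfl | hb
            · exact le_rfl
            · have := mem_below.1 hb
              rw [Fin.le_def]
              omega
          have h1 := Fin.le_def.1 (hle x hxS)
          rw [mem_below]
          have hne : x.val ≠ r := fun h => hρS (by
            have : x = ρ := Fin.ext (by omega)
            exact this ▸ hxS)
          omega
      · intro j hj
        by_cases hjρ : j.val = r
        · refine ⟨insert ρ (below n (s - 2)), ?_, ?_, le_rfl, ?_⟩
          · have : j = ρ := Fin.ext (by omega)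
            rw [this]; exact Finset.mem_insert_self _ _
          · rw [Finset.card_insert_of_notMem hρnb, card_below (by omega)]; omega
          · intro x hx
            rcases Finset.mem_insert.1 hx with rfl | hx
            · omega
            · have := mem_below.1 hx; omega
        · have hjr : j.val < r := by omega
          obtain ⟨S, hjS, hSsub, hScard⟩ := Finset.exists_subsuperset_card_eq (n := s - 1)
            (Finset.singleton_subset_iff.2 (mem_below.2 hjr))
            (by rw [Finset.card_singleton]; omega)
            (by rw [card_below (by omega)]; omega)
          refine ⟨S, hjS (Finset.mem_singleton_self j), hScard, ?_, ?_⟩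
          · refine le_of_lt (colex_lt_of_forall_lt (Finset.mem_insert_self ρ _) ?_)
            intro x hx
            have := mem_below.1 (hSsub hx)
            rw [Fin.lt_def]; omega
          · intro x hx
            have := mem_below.1 (hSsub hx); omega
    · push_neg at hcase
      refine ⟨below n (s - 1), card_below (by omega), ?_, ?_, ?_⟩
      · intro x hx; have := mem_below.1 hx; omega
      · intro S hScard hSle
        left
        have hge := below_colex_le (n := n) (t := s - 1) (S := S) hScard
        exact toColex_inj.1 (le_antisymm hSle hge)
      · intro j hj
        exact ⟨below n (s - 1), mem_below.2 (by omega), card_below (by omega), le_rfl,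
          fun x hx => by have := mem_below.1 hx; omega⟩
  have hκT : κ ∉ T := fun h => by have := hT2 κ h; omega
  set Astar : Finset (Fin n) := insert κ T with hAstar
  have hAcard : #Astar = s := by
    rw [hAstar, Finset.card_insert_of_notMem hκT, hT1]; omega
  set 𝒞 : Finset (Finset (Fin n)) := initSeg Astar with h𝒞
  -- upper bound on #𝒞
  have hupper : #𝒞 ≤ k.choose s + r.choose (s - 1) + 1 := by
    have hsub : 𝒞 ⊆ (Finset.powersetCard s (below n k) ∪
        ((Finset.powersetCard (s - 1) (below n r)).image (insert κ)) ∪ {Astar}) := by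
      intro A hA
      rw [h𝒞, mem_initSeg] at hA
      obtain ⟨hAc, hAle⟩ := hA
      rw [hAcard] at hAc
      have hmax : ∀ x ∈ A, x ≤ κ := by
        apply forall_le_mono hAle
        intro b hb
        rcases Finset.mem_insert.1 hb with rfl | hb
        · exact le_rfl
        · have := hT2 b hb
          rw [Fin.le_def]; omega
      by_cases hκA : κ ∈ A
      · have hsd : toColex (A \ {κ}) ≤ toColex (Astar \ {κ}) := by
          rw [toColex_sdiff_le_toColex_sdiff (by simpa using hκA) (by simp [hAstar])]
          exact hAle
        rw [Finset.sdiff_singleton_eq_erase, Finset.sdiff_singleton_eq_erase, hAstar,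
          Finset.erase_insert hκT] at hsd
        have hScard : #(A.erase κ) = s - 1 := by
          rw [Finset.card_erase_of_mem hκA, ← hAc]
        rcases hT3 _ hScard hsd with hST | hSsub
        · refine Finset.mem_union.2 (Or.inr ?_)
          rw [Finset.mem_singleton, hAstar, ← hST, Finset.insert_erase hκA]
        · refine Finset.mem_union.2 (Or.inl (Finset.mem_union.2 (Or.inr ?_)))
          refine Finset.mem_image.2 ⟨A.erase κ, ?_, Finset.insert_erase hκA⟩
          rw [Finset.mem_powersetCard]
          exact ⟨hSsub, hScard⟩
      · refine Finset.mem_union.2 (Or.inl (Finset.mem_union.2 (Or.inl ?_)))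
        rw [Finset.mem_powersetCard]
        refine ⟨fun x hx => mem_below.2 ?_, hAc.symm⟩
        have h1 := Fin.le_def.1 (hmax x hx)
        have h2 : x.val ≠ k := fun h => hκA (by
          have : x = κ := Fin.ext (by omega)
          exact this ▸ hx)
        omega
    calc #𝒞 ≤ _ := Finset.card_le_card hsub
      _ ≤ #(Finset.powersetCard s (below n k) ∪
            ((Finset.powersetCard (s - 1) (below n r)).image (insert κ))) + #({Astar} : Finset _) :=
          Finset.card_union_le _ _
      _ ≤ #(Finset.powersetCard s (below n k)) +
            #((Finset.powersetCard (s - 1) (below n r)).image (insert κ)) + 1 := by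
          have := Finset.card_union_le (Finset.powersetCard s (below n k))
            ((Finset.powersetCard (s - 1) (below n r)).image (insert κ))
          simp only [Finset.card_singleton]
          omega
      _ ≤ k.choose s + r.choose (s - 1) + 1 := by
          have h1 : #(Finset.powersetCard s (below n k)) = k.choose s := by
            rw [Finset.card_powersetCard, card_below (le_of_lt hk)]
          have h2 : #((Finset.powersetCard (s - 1) (below n r)).image (insert κ)) ≤
              r.choose (s - 1) := by
            calc _ ≤ #(Finset.powersetCard (s - 1) (below n r)) := Finset.card_image_le
              _ = r.choose (s - 1) := by
                  rw [Finset.card_powersetCard, card_below (by omega)]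
          omega
  have h𝒞le : #𝒞 ≤ #(cliqueFin G s) := hupper.trans (by omega)
  have hinit : IsInitSeg 𝒞 s := by
    have := isInitSeg_initSeg (s := Astar)
    rwa [hAcard] at this
  have hkk : #(∂^[s - 2] 𝒞) ≤ #(∂^[s - 2] (cliqueFin G s)) :=
    Finset.iterated_kk (cliqueFin_sized G s) h𝒞le hinit
  have hchain : ∂^[s - 2] (cliqueFin G s) ⊆ cliqueFin G 2 := by
    have := iterated_shadow_cliqueFin G (s - 2) 2
    rwa [show 2 + (s - 2) = s by omega] at this
  -- lower bound on the iterated shadow of 𝒞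
  set PP : Finset (Finset (Fin n)) := Finset.powersetCard 2 (below n k) ∪
      (below n (r + 1)).image (fun j => insert j {κ}) with hPP
  have hPsub : PP ⊆ ∂^[s - 2] 𝒞 := by
    intro B hB
    rw [Finset.mem_shadow_iterate_iff_exists_sdiff]
    rcases Finset.mem_union.1 hB with hB | hB
    · rw [Finset.mem_powersetCard] at hB
      obtain ⟨A, hBA, hAsub, hAcard'⟩ := Finset.exists_subsuperset_card_eq (n := s) hB.1
        (by rw [hB.2]; omega) (by rw [card_below (le_of_lt hk)]; exact hsk)
      refine ⟨A, ?_, hBA, ?_⟩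
      · rw [h𝒞, mem_initSeg]
        refine ⟨by rw [hAcard, hAcard'], le_of_lt (colex_lt_of_forall_lt
          (Finset.mem_insert_self κ T) ?_)⟩
        intro x hx
        rw [Fin.lt_def]
        have := mem_below.1 (hAsub hx)
        omega
      · rw [Finset.card_sdiff_of_subset hBA, hAcard', hB.2]
    · obtain ⟨j, hj, rfl⟩ := Finset.mem_image.1 hB
      have hjr := mem_below.1 hj
      obtain ⟨S, hjS, hScard, hSle, hSk⟩ := hT4 j hjr
      have hκS : κ ∉ S := fun h => by have := hSk κ h; omega
      have hjκ : j ≠ κ := fun h => by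
        have : j.val = k := by rw [h, hκv]
        omega
      have hBsub : insert j {κ} ⊆ insert κ S := by
        intro x hx
        rcases Finset.mem_insert.1 hx with rfl | hx
        · exact Finset.mem_insert_of_mem hjS
        · rw [Finset.mem_singleton] at hx
          exact hx ▸ Finset.mem_insert_self κ S
      refine ⟨insert κ S, ?_, hBsub, ?_⟩
      · rw [h𝒞, mem_initSeg]
        constructor
        · rw [hAcard, Finset.card_insert_of_notMem hκS, hScard]; omega
        · have h5 : toColex ((insert κ S) \ {κ}) ≤ toColex (Astar \ {κ}) := by
            rw [Finset.sdiff_singleton_eq_erase, Finset.sdiff_singleton_eq_erase,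
              Finset.erase_insert hκS, hAstar, Finset.erase_insert hκT]
            exact hSle
          rwa [toColex_sdiff_le_toColex_sdiff (by simp) (by simp [hAstar])] at h5
      · rw [Finset.card_sdiff_of_subset hBsub, Finset.card_insert_of_notMem hκS, hScard,
          Finset.card_insert_of_notMem (by simpa using hjκ), Finset.card_singleton]
        omega
  have hPcard : #PP = k.choose 2 + (r + 1) := by
    rw [hPP, Finset.card_union_of_disjoint, Finset.card_powersetCard,
      card_below (le_of_lt hk), Finset.card_image_of_injOn, card_below (by omega : r + 1 ≤ n)]
    · intro j1 hj1 j2 hj2 heq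
      have heq' : insert j1 ({κ} : Finset (Fin n)) = insert j2 ({κ} : Finset (Fin n)) := heq
      have h1 : j1 ∈ insert j2 ({κ} : Finset (Fin n)) := heq' ▸ Finset.mem_insert_self j1 {κ}
      rcases Finset.mem_insert.1 h1 with h | h
      · exact h
      · rw [Finset.mem_singleton] at h
        exfalso
        have h2 := mem_below.1 hj1
        have : j1.val = k := by rw [h, hκv]
        omega
    · rw [Finset.disjoint_left]
      intro t ht1 ht2
      rw [Finset.mem_powersetCard] at ht1
      obtain ⟨j, hj, rfl⟩ := Finset.mem_image.1 ht2
      have hκt : κ ∈ insert j ({κ} : Finset (Fin n)) :=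
        Finset.mem_insert_of_mem (Finset.mem_singleton_self κ)
      have := mem_below.1 (ht1.1 hκt)
      omega
  have hfinal : k.choose 2 + (r + 1) ≤ k.choose 2 + r := by
    calc k.choose 2 + (r + 1) = #PP := hPcard.symm
      _ ≤ #(∂^[s - 2] 𝒞) := Finset.card_le_card hPsub
      _ ≤ #(∂^[s - 2] (cliqueFin G s)) := hkk
      _ ≤ #(cliqueFin G 2) := Finset.card_le_card hchain
      _ = k.choose 2 + r := hm
  omega

-- trivial bound
lemma card_cliqueFin_le_choose (G : SimpleGraph (Fin n)) (s : ℕ) :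
    #(cliqueFin G s) ≤ n.choose s := by
  classical
  have hsub : cliqueFin G s ⊆ Finset.powersetCard s Finset.univ := by
    intro t ht
    rw [Finset.mem_powersetCard]
    exact ⟨Finset.subset_univ t, (mem_cliqueFin G |>.1 ht).2⟩
  calc #(cliqueFin G s) ≤ _ := Finset.card_le_card hsub
    _ = n.choose s := by rw [Finset.card_powersetCard, Finset.card_univ, Fintype.card_fin]

/-- combined bound valid also when `k = n` (then `r = 0`). -/
lemma card_cliqueFin_le' {k r s : ℕ} (hkn : k ≤ n) (hrk : r < k) (hs : 2 ≤ s)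
    (hr0 : k = n → r = 0)
    (G : SimpleGraph (Fin n)) (hm : #(cliqueFin G 2) = k.choose 2 + r) :
    #(cliqueFin G s) ≤ k.choose s + r.choose (s - 1) := by
  rcases lt_or_eq_of_le hkn with h | h
  · exact card_cliqueFin_le h hrk hs G hm
  · calc #(cliqueFin G s) ≤ n.choose s := card_cliqueFin_le_choose G s
      _ = k.choose s := by rw [h]
      _ ≤ k.choose s + r.choose (s - 1) := Nat.le_add_right _ _

lemma sum_choose_two (k : ℕ) (hk : 1 ≤ k) :
    (∑ t ∈ Finset.Icc 2 k, k.choose t) + k + 1 = 2 ^ k := by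
  have hset : Finset.range (k + 1) = insert 0 (insert 1 (Finset.Icc 2 k)) := by
    ext x
    simp only [Finset.mem_range, Finset.mem_insert, Finset.mem_Icc]
    omega
  have := Nat.sum_range_choose k
  rw [hset, Finset.sum_insert (by simp), Finset.sum_insert (by simp)] at this
  rw [Nat.choose_zero_right, Nat.choose_one_right] at this
  omega

lemma sum_choose_one (r : ℕ) : (∑ t ∈ Finset.Icc 1 r, r.choose t) + 1 = 2 ^ r := by
  have hset : Finset.range (r + 1) = insert 0 (Finset.Icc 1 r) := by
    ext x
    simp only [Finset.mem_range, Finset.mem_insert, Finset.mem_Icc]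
    omega
  have := Nat.sum_range_choose r
  rw [hset, Finset.sum_insert (by simp), Nat.choose_zero_right] at this
  omega

lemma sum_bound {k r : ℕ} (hk : 1 ≤ k) (hkn : k ≤ n) (hrn : r + 1 ≤ n) :
    (∑ s ∈ Finset.Icc 2 n, (k.choose s + r.choose (s - 1))) + k + 2 = 2 ^ k + 2 ^ r := by
  rw [Finset.sum_add_distrib]
  have h1 : ∑ s ∈ Finset.Icc 2 n, k.choose s = ∑ s ∈ Finset.Icc 2 k, k.choose s := by
    symm
    apply Finset.sum_subset (Finset.Icc_subset_Icc_right hkn)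
    intro x hx hnx
    rw [Finset.mem_Icc] at hx hnx
    exact Nat.choose_eq_zero_of_lt (by omega)
  have h2 : ∑ s ∈ Finset.Icc 2 n, r.choose (s - 1) = ∑ t ∈ Finset.Icc 1 r, r.choose t := by
    have hstep : ∑ s ∈ Finset.Icc 2 n, r.choose (s - 1) =
        ∑ s ∈ Finset.Icc 2 (r + 1), r.choose (s - 1) := by
      symm
      apply Finset.sum_subset (Finset.Icc_subset_Icc_right hrn)
      intro x hx hnx
      rw [Finset.mem_Icc] at hx hnx
      exact Nat.choose_eq_zero_of_lt (by omega)
    rw [hstep]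
    apply Finset.sum_nbij' (i := fun s => s - 1) (j := fun t => t + 1)
    · intro a ha; rw [Finset.mem_Icc] at *; omega
    · intro a ha; rw [Finset.mem_Icc] at *; omega
    · intro a ha; rw [Finset.mem_Icc] at ha; omega
    · intro a ha; omega
    · intro a ha; rfl
  rw [h1, h2]
  have := sum_choose_two k hk
  have := sum_choose_one r
  omega

/-- lower bound for the number of cliques of `graphHnm`. -/
lemma numCliques_graphHnm_ge {k r : ℕ} (hk : 1 ≤ k) (hkn : k ≤ n) (hrk : r < k)
    (hr0 : k = n → r = 0) :
    n + 2 ^ k + 2 ^ r ≤ numCliques (graphHnm n k r) + k + 2 := by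
  classical
  rw [numCliques_eq_card]
  rcases eq_or_lt_of_le hkn with heq | hlt
  · -- k = n, r = 0
    have hr : r = 0 := hr0 heq
    subst hr
    have hF1 : (below n k).powerset.erase ∅ ⊆ allCliques (graphHnm n k 0) := by
      intro t ht
      rw [Finset.mem_erase, Finset.mem_powerset] at ht
      rw [mem_allCliques]
      refine ⟨Finset.nonempty_of_ne_empty ht.1, ?_⟩
      intro a ha b hb hab
      have ha' := mem_below.1 (ht.2 ha)
      have hb' := mem_below.1 (ht.2 hb)
      show _ ∧ _
      exact ⟨hab, Or.inl ⟨ha', hb'⟩⟩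
    have hcard : #((below n k).powerset.erase ∅) = 2 ^ k - 1 := by
      rw [Finset.card_erase_of_mem (Finset.empty_mem_powerset _), Finset.card_powerset,
        card_below hkn]
    have := Finset.card_le_card hF1
    rw [hcard] at this
    have h2k : 1 ≤ 2 ^ k := Nat.one_le_two_pow
    omega
  · -- k < n
    obtain ⟨κ, hκv⟩ : ∃ x : Fin n, x.val = k := ⟨⟨k, hlt⟩, rfl⟩
    set F1 : Finset (Finset (Fin n)) := (below n k).powerset.erase ∅ with hF1def
    set F2 : Finset (Finset (Fin n)) := (below n r).powerset.image (insert κ) with hF2def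
    set F3 : Finset (Finset (Fin n)) :=
      (Finset.univ.filter (fun v : Fin n => k < v.val)).image (fun v => {v}) with hF3def
    have hsub : F1 ∪ F2 ∪ F3 ⊆ allCliques (graphHnm n k r) := by
      intro t ht
      rw [mem_allCliques]
      rcases Finset.mem_union.1 ht with ht | ht
      · rcases Finset.mem_union.1 ht with ht | ht
        · rw [hF1def, Finset.mem_erase, Finset.mem_powerset] at ht
          refine ⟨Finset.nonempty_of_ne_empty ht.1, ?_⟩
          intro a ha b hb hab
          show _ ∧ _
          exact ⟨hab, Or.inl ⟨mem_below.1 (ht.2 ha), mem_below.1 (ht.2 hb)⟩⟩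
        · rw [hF2def, Finset.mem_image] at ht
          obtain ⟨S, hS, rfl⟩ := ht
          rw [Finset.mem_powerset] at hS
          refine ⟨Finset.insert_nonempty _ _, ?_⟩
          intro a ha b hb hab
          rw [Finset.coe_insert, Set.mem_insert_iff] at ha hb
          show _ ∧ _
          refine ⟨hab, ?_⟩
          rcases ha with rfl | ha <;> rcases hb with rfl | hb
          · exact absurd rfl hab
          · exact Or.inr (Or.inl ⟨hκv, by
              have := mem_below.1 (hS hb); omega⟩)
          · exact Or.inr (Or.inr ⟨hκv, by
              have := mem_below.1 (hS ha); omega⟩)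
          · have h1 := mem_below.1 (hS ha)
            have h2 := mem_below.1 (hS hb)
            exact Or.inl ⟨by omega, by omega⟩
      · rw [hF3def, Finset.mem_image] at ht
        obtain ⟨v, hv, rfl⟩ := ht
        refine ⟨Finset.singleton_nonempty v, ?_⟩
        rw [Finset.coe_singleton]
        exact Set.pairwise_singleton v _
    have hd12 : Disjoint F1 F2 := by
      rw [Finset.disjoint_left]
      intro t ht1 ht2
      rw [hF1def, Finset.mem_erase, Finset.mem_powerset] at ht1
      rw [hF2def, Finset.mem_image] at ht2
      obtain ⟨S, _, rfl⟩ := ht2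
      have := mem_below.1 (ht1.2 (Finset.mem_insert_self κ S))
      omega
    have hd3 : Disjoint (F1 ∪ F2) F3 := by
      rw [Finset.disjoint_left]
      intro t ht1 ht2
      rw [hF3def, Finset.mem_image] at ht2
      obtain ⟨v, hv, rfl⟩ := ht2
      rw [Finset.mem_filter] at hv
      rcases Finset.mem_union.1 ht1 with ht | ht
      · rw [hF1def, Finset.mem_erase, Finset.mem_powerset] at ht
        have := mem_below.1 (ht.2 (Finset.mem_singleton_self v))
        omega
      · rw [hF2def, Finset.mem_image] at ht
        obtain ⟨S, _, hSeq⟩ := ht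
        have : κ ∈ ({v} : Finset (Fin n)) := hSeq ▸ Finset.mem_insert_self κ S
        rw [Finset.mem_singleton] at this
        rw [← this, hκv] at hv
        omega
    have hc1 : #F1 = 2 ^ k - 1 := by
      rw [hF1def, Finset.card_erase_of_mem (Finset.empty_mem_powerset _), Finset.card_powerset,
        card_below hkn]
    have hc2 : #F2 = 2 ^ r := by
      rw [hF2def, Finset.card_image_of_injOn, Finset.card_powerset, card_below (by omega)]
      intro S1 hS1 S2 hS2 heq
      rw [Finset.mem_coe, Finset.mem_powerset] at hS1 hS2
      have hκ1 : κ ∉ S1 := fun h => by have := mem_below.1 (hS1 h); omega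
      have hκ2 : κ ∉ S2 := fun h => by have := mem_below.1 (hS2 h); omega
      have := congrArg (fun t => Finset.erase t κ) heq
      simpa [Finset.erase_insert hκ1, Finset.erase_insert hκ2] using this
    have hc3 : #F3 = n - (k + 1) := by
      rw [hF3def, Finset.card_image_of_injOn (fun a _ b _ h => by simpa using h)]
      have hpm : (Finset.univ.filter (fun v : Fin n => v.val < k + 1)) = below n (k + 1) := by
        ext x; simp [mem_below]
      have := Finset.card_filter_add_card_filter_not
        (s := (Finset.univ : Finset (Fin n))) (p := fun v : Fin n => v.val < k + 1)
      rw [hpm, card_below (by omega)] at this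
      have hcongr : Finset.univ.filter (fun v : Fin n => ¬ v.val < k + 1) =
          Finset.univ.filter (fun v : Fin n => k < v.val) := by
        apply Finset.filter_congr
        intro x _
        constructor <;> (intro h; omega)
      rw [hcongr] at this
      rw [Finset.card_univ, Fintype.card_fin] at this
      omega
    have hcard : #(F1 ∪ F2 ∪ F3) = (2 ^ k - 1) + 2 ^ r + (n - (k + 1)) := by
      rw [Finset.card_union_of_disjoint hd3, Finset.card_union_of_disjoint hd12, hc1, hc2, hc3]
    have hle := Finset.card_le_card hsub
    rw [hcard] at hle
    have h2k : k + 1 ≤ 2 ^ k := Nat.lt_two_pow_self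
    have h2r : 1 ≤ 2 ^ r := Nat.one_le_two_pow
    omega


theorem numCliques_le_graphHnm (n m k r : ℕ) (hm : m ≤ n * (n - 1) / 2)
    (hk1 : k * (k - 1) / 2 ≤ m) (hk2 : m < (k + 1) * k / 2) (hr : r = m - k * (k - 1) / 2)
    (G : SimpleGraph (Fin n)) (hG : Nat.card G.edgeSet = m) :
    numCliques G ≤ numCliques (graphHnm n k r) := by
  rcases Nat.eq_zero_or_pos n with hn | hn
  · subst hn
    have hempty : IsEmpty {s : Finset (Fin 0) // s.Nonempty ∧ G.IsClique (s : Set (Fin 0))} :=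
      ⟨fun ⟨s, hs⟩ => (hs.1.choose).elim0⟩
    rw [numCliques, Nat.card_of_isEmpty]
    exact Nat.zero_le _
  · have hk0 : 1 ≤ k := by
      by_contra h
      push_neg at h
      have hk' : k = 0 := by omega
      subst hk'
      norm_num at hk2
    have hch2 : k.choose 2 = k * (k - 1) / 2 := Nat.choose_two_right k
    have hchn2 : n.choose 2 = n * (n - 1) / 2 := Nat.choose_two_right n
    have hm2 : m = k.choose 2 + r := by omega
    have hdiv : (k + 1) * k / 2 = k * (k - 1) / 2 + k := by
      obtain ⟨k', rfl⟩ : ∃ k', k = k' + 1 := ⟨k - 1, by omega⟩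
      rw [show (k' + 1 + 1) * (k' + 1) = (k' + 1) * ((k' + 1) - 1) + (k' + 1) * 2 by
        simp; ring]
      exact Nat.add_mul_div_right _ _ (by norm_num)
    have hrk : r < k := by omega
    have hkn : k ≤ n := by
      by_contra h
      push_neg at h
      have h1 : (n + 1).choose 2 ≤ k.choose 2 := Nat.choose_le_choose 2 (by omega)
      have h2 : (n + 1).choose 2 = n.choose 1 + n.choose 2 := Nat.choose_succ_succ n 1
      rw [Nat.choose_one_right] at h2
      omega
    have hr0 : k = n → r = 0 := by
      intro h
      subst h
      omega
    have hG2 : #(cliqueFin G 2) = k.choose 2 + r := by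
      rw [card_cliqueFin_two, hG]
      omega
    have hsplit : Finset.Icc 1 n = insert 1 (Finset.Icc 2 n) := by
      ext x
      simp only [Finset.mem_Icc, Finset.mem_insert]
      omega
    have hG_eq : numCliques G = n + ∑ s ∈ Finset.Icc 2 n, #(cliqueFin G s) := by
      rw [numCliques_eq_card, card_allCliques, hsplit,
        Finset.sum_insert (by simp), card_cliqueFin_one]
    have hsum_le : ∑ s ∈ Finset.Icc 2 n, #(cliqueFin G s) ≤
        ∑ s ∈ Finset.Icc 2 n, (k.choose s + r.choose (s - 1)) :=
      Finset.sum_le_sum (fun s hs => card_cliqueFin_le' hkn hrk (Finset.mem_Icc.1 hs).1 hr0 G hG2)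
    have hsum_eq := sum_bound (n := n) hk0 hkn (by omega : r + 1 ≤ n)
    have hH := numCliques_graphHnm_ge (n := n) hk0 hkn hrk hr0
    omega
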